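/- For every f ∈ 𝔫*, the subspace m_f spanned by the elementary matrices E_{ij} (1 ≤ i < j ≤ n) for which there is NO pair (a,b) ∈ Supp(f) with a ≤ i and j ≤ b is a Lie ideal of 𝔫; moreover every element f' of the coadjoint orbit N·f vanishes identically on m_f. -/

import Mathlib

open Matrix

/-- The Lie algebra `𝔫` of strictly upper triangular `n × n` matrices over `F`,
as a submodule of the matrix space. -/
def strictUpper (F : Type*) [Field F] (n : ℕ) : Submodule F (Matrix (Fin n) (Fin n) F) where
  carrier := {x | ∀ i j : Fin n, j ≤ i → x i j = 0}
  add_mem' := by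
    intro x y hx hy i j hij
    show x i j + y i j = 0
    rw [hx i j hij, hy i j hij, add_zero]
  zero_mem' := by intro i j _; rfl
  smul_mem' := by
    intro c x hx i j hij
    show c * x i j = 0
    rw [hx i j hij, mul_zero]

lemma mul_mem_strictUpper {F : Type*} [Field F] {n : ℕ} {x y : Matrix (Fin n) (Fin n) F}
    (hx : x ∈ strictUpper F n) (hy : y ∈ strictUpper F n) : x * y ∈ strictUpper F n := by
  intro i j hji
  rw [Matrix.mul_apply]
  refine Finset.sum_eq_zero fun k _ => ?_
  rcases le_or_gt k i with h | h
  · rw [hx i k h, zero_mul]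
  · rw [hy k j (hji.trans h.le), mul_zero]

/-- The Lie bracket (commutator) on `𝔫`, as a bilinear map. -/
def commBracket (F : Type*) [Field F] (n : ℕ) :
    strictUpper F n →ₗ[F] strictUpper F n →ₗ[F] strictUpper F n :=
  LinearMap.mk₂ F
    (fun x y => ⟨(x : Matrix (Fin n) (Fin n) F) * y - (y : Matrix (Fin n) (Fin n) F) * x,
      sub_mem (mul_mem_strictUpper x.2 y.2) (mul_mem_strictUpper y.2 x.2)⟩)
    (fun x x' y => by
      apply Subtype.ext
      show ((x : Matrix (Fin n) (Fin n) F) + x') * y - (y : Matrix (Fin n) (Fin n) F) * (x + x')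
          = ((x : Matrix (Fin n) (Fin n) F) * y - (y : Matrix (Fin n) (Fin n) F) * x)
            + ((x' : Matrix (Fin n) (Fin n) F) * y - (y : Matrix (Fin n) (Fin n) F) * x')
      noncomm_ring)
    (fun c x y => by
      apply Subtype.ext
      show (c • (x : Matrix (Fin n) (Fin n) F)) * y - (y : Matrix (Fin n) (Fin n) F) * (c • x)
          = c • ((x : Matrix (Fin n) (Fin n) F) * y - (y : Matrix (Fin n) (Fin n) F) * x)
      rw [smul_mul_assoc, mul_smul_comm, smul_sub])
    (fun x y y' => by
      apply Subtype.ext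
      show (x : Matrix (Fin n) (Fin n) F) * (y + y') - ((y : Matrix (Fin n) (Fin n) F) + y') * x
          = ((x : Matrix (Fin n) (Fin n) F) * y - (y : Matrix (Fin n) (Fin n) F) * x)
            + ((x : Matrix (Fin n) (Fin n) F) * y' - (y' : Matrix (Fin n) (Fin n) F) * x)
      noncomm_ring)
    (fun c x y => by
      apply Subtype.ext
      show (x : Matrix (Fin n) (Fin n) F) * (c • y) - (c • (y : Matrix (Fin n) (Fin n) F)) * x
          = c • ((x : Matrix (Fin n) (Fin n) F) * y - (y : Matrix (Fin n) (Fin n) F) * x)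
      rw [smul_mul_assoc, mul_smul_comm, smul_sub])

/-- The elementary matrix `E_{ij}` (with `i < j`) as an element of `𝔫`. -/
def Eelt (F : Type*) [Field F] (n : ℕ) (i j : Fin n) (h : i < j) : strictUpper F n :=
  ⟨Matrix.single i j 1, by
    intro a b hba
    refine Matrix.single_apply_of_ne i j 1 a b ?_
    rintro ⟨rfl, rfl⟩
    exact absurd h (not_lt.mpr hba)⟩

/-- The support of a linear form `f ∈ 𝔫*`. -/
def Supp (F : Type*) [Field F] (n : ℕ) (f : Module.Dual F (strictUpper F n)) :
    Set (Fin n × Fin n) :=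
  {p | ∃ h : p.1 < p.2, f (Eelt F n p.1 p.2 h) ≠ 0}

/-- A matrix is upper unitriangular if it has `1`'s on the diagonal and
`0`'s below the diagonal. -/
def IsUnitriangular {F : Type*} [Field F] {n : ℕ} (g : Matrix (Fin n) (Fin n) F) : Prop :=
  (∀ i, g i i = 1) ∧ ∀ i j : Fin n, j < i → g i j = 0

/-- The coadjoint orbit `N·f` of a linear form `f ∈ 𝔫*`. -/
def coadjOrbit (F : Type*) [Field F] (n : ℕ) (f : Module.Dual F (strictUpper F n)) :
    Set (Module.Dual F (strictUpper F n)) :=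
  {f' | ∃ g g' : Matrix (Fin n) (Fin n) F, IsUnitriangular g ∧ IsUnitriangular g' ∧
    g * g' = 1 ∧ g' * g = 1 ∧
    ∀ (x : strictUpper F n) (hx : g' * (x : Matrix (Fin n) (Fin n) F) * g ∈ strictUpper F n),
      f' x = f ⟨g' * (x : Matrix (Fin n) (Fin n) F) * g, hx⟩}

/-- The subspace `m_f` spanned by the `E_{ij}` (`i < j`) such that no pair
`(a, b) ∈ Supp f` satisfies `a ≤ i` and `j ≤ b`. -/
def mSubspace (F : Type*) [Field F] (n : ℕ) (f : Module.Dual F (strictUpper F n)) :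
    Submodule F (strictUpper F n) :=
  Submodule.span F
    {x | ∃ (i j : Fin n) (h : i < j), x = Eelt F n i j h ∧
      ¬ ∃ q ∈ Supp F n f, q.1 ≤ i ∧ j ≤ q.2}

section Aux

variable {F : Type*} [Field F] {n : ℕ}

/-- `E_{ij}` extended by zero to all pairs. -/
noncomputable def eElt (F : Type*) [Field F] (n : ℕ) (p : Fin n × Fin n) : strictUpper F n :=
  if h : p.1 < p.2 then Eelt F n p.1 p.2 h else 0

lemma eElt_coe_apply (p : Fin n × Fin n) (a b : Fin n) :
    ((eElt F n p : strictUpper F n) : Matrix (Fin n) (Fin n) F) a b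
      = if p.1 = a ∧ p.2 = b ∧ p.1 < p.2 then 1 else 0 := by
  unfold eElt
  by_cases h : p.1 < p.2
  · simp only [dif_pos h, Eelt]
    by_cases hab : p.1 = a ∧ p.2 = b
    · obtain ⟨rfl, rfl⟩ := hab
      simp [h]
    · rw [Matrix.single_apply_of_ne _ _ _ _ _ hab]
      rw [if_neg (by tauto)]
  · simp only [dif_neg h]
    rw [if_neg (by tauto)]
    rfl

lemma sum_eElt (z : strictUpper F n) :
    z = ∑ p : Fin n × Fin n,
      ((z : Matrix (Fin n) (Fin n) F) p.1 p.2) • eElt F n p := by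
  apply Subtype.ext
  rw [AddSubmonoidClass.coe_finset_sum]
  ext a b
  rw [Matrix.sum_apply]
  rw [Finset.sum_eq_single (a, b)]
  · simp only [SetLike.val_smul, Matrix.smul_apply, eElt_coe_apply, smul_eq_mul]
    by_cases h : a < b
    · simp [h]
    · simp only [h, and_false, if_false, mul_zero]
      exact z.2 a b (not_lt.1 h)
  · intro p _ hp
    simp only [SetLike.val_smul, Matrix.smul_apply, eElt_coe_apply, smul_eq_mul]
    rw [if_neg, mul_zero]
    rintro ⟨rfl, rfl, -⟩
    exact hp rfl
  · intro h; exact absurd (Finset.mem_univ _) h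

lemma dual_apply (f : Module.Dual F (strictUpper F n)) (z : strictUpper F n) :
    f z = ∑ p : Fin n × Fin n,
      ((z : Matrix (Fin n) (Fin n) F) p.1 p.2) * f (eElt F n p) := by
  conv_lhs => rw [sum_eElt z]
  rw [map_sum]
  simp [smul_eq_mul]

lemma mem_mSubspace_of (f : Module.Dual F (strictUpper F n)) (z : strictUpper F n)
    (h : ∀ a b : Fin n, a < b → (z : Matrix (Fin n) (Fin n) F) a b ≠ 0 →
      ¬ ∃ q ∈ Supp F n f, q.1 ≤ a ∧ b ≤ q.2) :
    z ∈ mSubspace F n f := by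
  rw [sum_eElt z]
  apply Submodule.sum_mem
  intro p _
  by_cases hz : (z : Matrix (Fin n) (Fin n) F) p.1 p.2 = 0
  · rw [hz, zero_smul]; exact zero_mem _
  · apply Submodule.smul_mem
    by_cases hlt : p.1 < p.2
    · apply Submodule.subset_span
      exact ⟨p.1, p.2, hlt, by simp [eElt, hlt], h _ _ hlt hz⟩
    · exact absurd (z.2 p.1 p.2 (not_lt.1 hlt)) hz

end Aux

/-- `m_f` is a Lie ideal of `𝔫`, and every element of the coadjoint orbit `N·f`
vanishes identically on `m_f`. -/
theorem mSubspace_lieIdeal_and_orbit_vanishes (F : Type*) [Field F] [IsAlgClosed F] [CharZero F]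
    (n : ℕ) (hn : 2 ≤ n) (f : Module.Dual F (strictUpper F n)) :
    (∀ x : strictUpper F n, ∀ y ∈ mSubspace F n f,
        commBracket F n x y ∈ mSubspace F n f) ∧
    (∀ f' ∈ coadjOrbit F n f, ∀ y ∈ mSubspace F n f, f' y = 0) := by
  constructor
  · intro x y hy
    induction hy using Submodule.span_induction with
    | mem z hz =>
        obtain ⟨i, j, hij, rfl, hcond⟩ := hz
        apply mem_mSubspace_of
        intro a b hab hne hq
        obtain ⟨q, hqS, hq1, hq2⟩ := hq
        have hval : ((commBracket F n x (Eelt F n i j hij) : strictUpper F n)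
              : Matrix (Fin n) (Fin n) F)
            = (x : Matrix (Fin n) (Fin n) F) * single i j 1
              - single i j 1 * (x : Matrix (Fin n) (Fin n) F) := rfl
        rw [hval] at hne
        have key : a ≤ i ∧ j ≤ b := by
          by_cases hbj : b = j <;> by_cases hai : a = i
          · exact ⟨hai.le, hbj.ge⟩
          · subst hbj
            refine ⟨?_, le_rfl⟩
            by_contra h
            rw [Matrix.sub_apply, Matrix.mul_single_apply_same,
                Matrix.single_mul_apply_of_ne (h := hai), mul_one, sub_zero] at hne
            exact hne (x.2 a i (not_le.1 h).le)
          · subst hai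
            refine ⟨le_rfl, ?_⟩
            by_contra h
            rw [Matrix.sub_apply, Matrix.mul_single_apply_of_ne (hbj := hbj),
                Matrix.single_mul_apply_same, one_mul, zero_sub, neg_ne_zero] at hne
            exact hne (x.2 j b (not_le.1 h).le)
          · rw [Matrix.sub_apply, Matrix.mul_single_apply_of_ne (hbj := hbj),
                Matrix.single_mul_apply_of_ne (h := hai), sub_zero] at hne
            exact (hne rfl).elim
        exact hcond ⟨q, hqS, hq1.trans key.1, key.2.trans hq2⟩
    | zero => rw [map_zero]; exact zero_mem _
    | add y z _ _ ihy ihz => rw [map_add]; exact add_mem ihy ihz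
    | smul c y _ ihy => rw [_root_.map_smul]; exact Submodule.smul_mem _ _ ihy
  · rintro f' ⟨g, g', hg, hg', hgg', hg'g, hf'⟩ y hy
    have hker : mSubspace F n f ≤ LinearMap.ker f' := by
      rw [mSubspace, Submodule.span_le]
      rintro z ⟨i, j, hij, rfl, hcond⟩
      have key : ∀ a b : Fin n,
          (g' * ((Eelt F n i j hij : strictUpper F n) : Matrix (Fin n) (Fin n) F) * g) a b
            = g' a i * g j b := by
        intro a b
        show (g' * (single i j 1 : Matrix (Fin n) (Fin n) F) * g) a b = _
        rw [Matrix.mul_apply, Finset.sum_eq_single j]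
        · rw [Matrix.mul_single_apply_same, mul_one]
        · intro k _ hk
          rw [Matrix.mul_single_apply_of_ne (hbj := hk), zero_mul]
        · intro h; exact absurd (Finset.mem_univ _) h
      have hmem : g' * ((Eelt F n i j hij : strictUpper F n) : Matrix (Fin n) (Fin n) F) * g
          ∈ strictUpper F n := by
        intro a b hba
        rw [key]
        by_cases hia : i < a
        · rw [hg'.2 a i hia, zero_mul]
        · have : b < j := lt_of_le_of_lt (hba.trans (not_lt.1 hia)) hij
          rw [hg.2 j b this, mul_zero]
      simp only [SetLike.mem_coe, LinearMap.mem_ker]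
      rw [hf' _ hmem, dual_apply]
      refine Finset.sum_eq_zero fun p _ => ?_
      rw [show ((⟨g' * ((Eelt F n i j hij : strictUpper F n) : Matrix (Fin n) (Fin n) F) * g,
            hmem⟩ : strictUpper F n) : Matrix (Fin n) (Fin n) F) p.1 p.2
          = g' p.1 i * g j p.2 from key p.1 p.2]
      by_cases hlt : p.1 < p.2
      · rcases eq_or_ne (g' p.1 i * g j p.2) 0 with hz | hz
        · rw [hz, zero_mul]
        · have hp1 : p.1 ≤ i := by
            by_contra h
            exact hz (by rw [hg'.2 p.1 i (not_le.1 h), zero_mul])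
          have hp2 : j ≤ p.2 := by
            by_contra h
            exact hz (by rw [hg.2 j p.2 (not_le.1 h), mul_zero])
          have hf0 : f (eElt F n p) = 0 := by
            rw [eElt, dif_pos hlt]
            by_contra hf0
            exact hcond ⟨p, ⟨hlt, hf0⟩, hp1, hp2⟩
          rw [hf0, mul_zero]
      · simp [eElt, hlt]
    exact LinearMap.mem_ker.1 (hker hy)
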